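/- Let V be a d×n real matrix with columns v_1,…,v_n, s an integer with 1 ≤ s ≤ d, and Ŝ ⊆ {1,…,n} with |Ŝ| = s such that {v_ℓ}_{ℓ∈Ŝ} are linearly independent. Let X = ∑_{ℓ∈Ŝ} v_ℓ v_ℓᵀ and let P be the Moore–Penrose pseudoinverse of X. Suppose Ŝ is locally optimal for A-MESP: for every i ∈ Ŝ and j ∈ {1,…,n}∖Ŝ with T = Ŝ∪{j}∖{i}, if the Gram matrix G_T of {v_ℓ}_{ℓ∈T} is nonsingular then tr(G_T^{-1}) ≥ tr(G_Ŝ^{-1}). Then for every i ∈ Ŝ and j ∈ {1,…,n}∖Ŝ: (v_iᵀ P³ v_i) · v_jᵀ (I_d − P X) v_j ≤ v_iᵀ P² v_i + (v_iᵀ P² v_i)·(v_jᵀ P v_j) − 2·(v_iᵀ P² v_j)·(v_iᵀ P v_j). -/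

import Mathlib

open Matrix Finset

noncomputable section

/-- `lam` lists the eigenvalues (with multiplicity) of the real symmetric matrix `X`,
via an orthogonal spectral decomposition. -/
def IsSpectralDecomp {m : Type*} [Fintype m] [DecidableEq m]
    (X : Matrix m m ℝ) (lam : m → ℝ) : Prop :=
  ∃ Q : Matrix m m ℝ, Q * Qᵀ = 1 ∧ X = Q * Matrix.diagonal lam * Qᵀ

/-- Principal submatrix `C_{S,S}`. -/
def subSub {n : ℕ} (C : Matrix (Fin n) (Fin n) ℝ) (S : Finset (Fin n)) :
    Matrix {i // i ∈ S} {i // i ∈ S} ℝ :=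
  Matrix.of fun a b => C a.1 b.1

/-- The value `λ_{i+1}` (1-based), i.e. the coordinate of `lam` of 0-based index `i`;
`0` when out of range. -/
def extVal {d : ℕ} (lam : Fin d → ℝ) : ℕ → ℝ :=
  fun i => if h : i < d then lam ⟨i, h⟩ else 0

/-- `∑_{i=k+1}^d λ_i` (1-based), i.e. the sum of the coordinates of 0-based index `≥ k`. -/
def tailSum {d : ℕ} (lam : Fin d → ℝ) (k : ℕ) : ℝ :=
  ∑ i ∈ Finset.univ.filter (fun i : Fin d => k ≤ (i : ℕ)), lam i

/-- `k = k(λ, s)`: an integer `0 ≤ k < s` with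
`λ_k > (1/(s-k)) ∑_{i=k+1}^d λ_i ≥ λ_{k+1}`, with the convention `λ₀ = +∞`. -/
def IsKIndex {d : ℕ} (lam : Fin d → ℝ) (s k : ℕ) : Prop :=
  k < s ∧ extVal lam k ≤ tailSum lam k / ((s : ℝ) - k) ∧
    (k = 0 ∨ tailSum lam k / ((s : ℝ) - k) < extVal lam (k - 1))

/-- `P` is the Moore–Penrose pseudoinverse of `X`. -/
def IsPseudoInv {d : ℕ} (X P : Matrix (Fin d) (Fin d) ℝ) : Prop :=
  X * P * X = X ∧ P * X * P = P ∧ (X * P)ᵀ = X * P ∧ (P * X)ᵀ = P * X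

namespace Stmt18Aux

set_option linter.unusedSectionVars false

variable {l m k : Type*} [Fintype l] [Fintype m] [Fintype k]

lemma mul_vmv (A : Matrix l m ℝ) (x : m → ℝ) (y : k → ℝ) :
    A * vecMulVec x y = vecMulVec (A *ᵥ x) y := by
  ext a b
  simp [Matrix.mul_apply, vecMulVec_apply, Matrix.mulVec, dotProduct, Finset.sum_mul, mul_assoc]

lemma vmv_mul (x : l → ℝ) (y : m → ℝ) (A : Matrix m k ℝ) :
    vecMulVec x y * A = vecMulVec x (y ᵥ* A) := by
  ext a b
  simp [Matrix.mul_apply, vecMulVec_apply, Matrix.vecMul, dotProduct, Finset.mul_sum, mul_assoc]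

lemma vmv_mulVec (x : l → ℝ) (y : m → ℝ) (z : m → ℝ) :
    vecMulVec x y *ᵥ z = (y ⬝ᵥ z) • x := by
  ext a
  simp [vecMulVec_apply, Matrix.mulVec, dotProduct, Finset.mul_sum, mul_assoc, Finset.sum_mul,
    mul_comm, mul_left_comm]

lemma vmv_mul_vmv (x : l → ℝ) (y : m → ℝ) (z : m → ℝ) (w : k → ℝ) :
    vecMulVec x y * vecMulVec z w = (y ⬝ᵥ z) • vecMulVec x w := by
  ext a b
  simp only [Matrix.mul_apply, vecMulVec_apply, Matrix.smul_apply, smul_eq_mul, dotProduct]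
  calc ∑ c, x a * y c * (z c * w b) = ∑ c, y c * z c * (x a * w b) := by
        exact Finset.sum_congr rfl (fun c _ => by ring)
    _ = (∑ c, y c * z c) * (x a * w b) := by rw [Finset.sum_mul]

lemma smul_vmv (r : ℝ) (x : l → ℝ) (y : m → ℝ) :
    vecMulVec (r • x) y = r • vecMulVec x y := by
  ext a b; simp [vecMulVec_apply]; ring

lemma vmv_transpose (x : l → ℝ) (y : m → ℝ) : (vecMulVec x y)ᵀ = vecMulVec y x := by
  ext a b; simp [vecMulVec_apply, Matrix.transpose_apply]; ring

lemma trace_vmv (x y : m → ℝ) : (vecMulVec x y).trace = x ⬝ᵥ y := by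
  simp [Matrix.trace, Matrix.diag, vecMulVec_apply, dotProduct]

lemma trace_submatrix_equiv {n : Type*} [Fintype n] (A : Matrix m m ℝ) (e : n ≃ m) :
    (A.submatrix e e).trace = A.trace := by
  simp only [Matrix.trace, Matrix.diag, Matrix.submatrix_apply]
  exact Fintype.sum_equiv e _ _ (fun _ => rfl)

lemma pinv_unique {d : ℕ} {X P Q : Matrix (Fin d) (Fin d) ℝ}
    (hP : IsPseudoInv X P) (hQ : IsPseudoInv X Q) : P = Q := by
  obtain ⟨hP1, hP2, hP3, hP4⟩ := hP
  obtain ⟨hQ1, hQ2, hQ3, hQ4⟩ := hQ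
  have e1 : X * P = (X * Q) * (X * P) := by
    conv_lhs => rw [← hQ1]
    rw [Matrix.mul_assoc, Matrix.mul_assoc]
  have e2 : X * P = (X * P) * (X * Q) := by
    conv_lhs => rw [← hP3, e1, Matrix.transpose_mul, hP3, hQ3]
  have e3 : X * Q = (X * P) * (X * Q) := by
    conv_lhs => rw [← hP1]
    rw [Matrix.mul_assoc, Matrix.mul_assoc]
  have hXPQ : X * P = X * Q := e2.trans e3.symm
  have f1 : P * X = (P * X) * (Q * X) := by
    conv_lhs => rw [← hQ1]
    simp only [← Matrix.mul_assoc]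
  have f2 : P * X = (Q * X) * (P * X) := by
    conv_lhs => rw [← hP4, f1, Matrix.transpose_mul, hP4, hQ4]
  have f3 : Q * X = (Q * X) * (P * X) := by
    conv_lhs => rw [← hP1]
    simp only [← Matrix.mul_assoc]
  have hPQX : P * X = Q * X := f2.trans f3.symm
  calc P = P * X * P := hP2.symm
    _ = Q * X * P := by rw [hPQX]
    _ = Q * (X * P) := by rw [Matrix.mul_assoc]
    _ = Q * (X * Q) := by rw [hXPQ]
    _ = Q * X * Q := by rw [Matrix.mul_assoc]
    _ = Q := hQ2

end Stmt18Aux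

open Stmt18Aux

set_option maxHeartbeats 1000000 in
/-- If `Ŝ` is locally optimal for A-MESP, then for every `i ∈ Ŝ` and
`j ∉ Ŝ`: `(vᵢᵀP³vᵢ)·vⱼᵀ(I − PX)vⱼ ≤ vᵢᵀP²vᵢ + (vᵢᵀP²vᵢ)(vⱼᵀPvⱼ) − 2(vᵢᵀP²vⱼ)(vᵢᵀPvⱼ)`,
where `X = ∑_{ℓ∈Ŝ} v_ℓ v_ℓᵀ` and `P = X†`. -/
theorem stmt_18 (d n s : ℕ) (hs1 : 1 ≤ s) (hsd : s ≤ d)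
    (V : Matrix (Fin d) (Fin n) ℝ) (Shat : Finset (Fin n)) (hcard : Shat.card = s)
    (hlin : LinearIndependent ℝ (fun i : {x // x ∈ Shat} => (fun a => V a i.1)))
    (X P : Matrix (Fin d) (Fin d) ℝ)
    (hX : X = ∑ i ∈ Shat, vecMulVec (fun a => V a i) (fun a => V a i))
    (hP : IsPseudoInv X P)
    (hloc : ∀ i ∈ Shat, ∀ j ∉ Shat,
      (subSub (Vᵀ * V) (insert j (Shat.erase i))).det ≠ 0 →
      Matrix.trace (subSub (Vᵀ * V) Shat)⁻¹ ≤
        Matrix.trace (subSub (Vᵀ * V) (insert j (Shat.erase i)))⁻¹) :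
    ∀ i ∈ Shat, ∀ j ∉ Shat,
      ((fun a => V a i) ⬝ᵥ ((P * P * P) *ᵥ fun a => V a i)) *
          ((fun a => V a j) ⬝ᵥ ((1 - P * X) *ᵥ fun a => V a j))
        ≤ ((fun a => V a i) ⬝ᵥ ((P * P) *ᵥ fun a => V a i))
          + ((fun a => V a i) ⬝ᵥ ((P * P) *ᵥ fun a => V a i)) *
              ((fun a => V a j) ⬝ᵥ (P *ᵥ fun a => V a j))
          - 2 * ((fun a => V a i) ⬝ᵥ ((P * P) *ᵥ fun a => V a j)) *
              ((fun a => V a i) ⬝ᵥ (P *ᵥ fun a => V a j)) := by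
  classical
  intro i hi j hj
  set wv : Fin d → ℝ := fun a => V a j with hwv
  set uv : Fin d → ℝ := fun a => V a i with huv
  set Vt : Matrix (Fin d) {x // x ∈ Shat} ℝ := Matrix.of (fun a k => V a k.1) with hVt
  set G : Matrix {x // x ∈ Shat} {x // x ∈ Shat} ℝ := Vtᵀ * Vt with hGdef
  set A : Matrix {x // x ∈ Shat} {x // x ∈ Shat} ℝ := G⁻¹ with hAdef
  -- linear independence facts
  have hVinj : ∀ x : {x // x ∈ Shat} → ℝ, Vt *ᵥ x = 0 → x = 0 := by
    intro x hx
    have hsum : ∑ k : {x // x ∈ Shat}, x k • (fun a => V a k.1) = (0 : Fin d → ℝ) := by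
      rw [← hx]; funext a
      simp [Matrix.mulVec, dotProduct, hVt, Finset.sum_apply, mul_comm]
    have := Fintype.linearIndependent_iff.mp hlin x hsum
    funext k; exact this k
  have hVdot : ∀ x y : {x // x ∈ Shat} → ℝ, (Vt *ᵥ x) ⬝ᵥ (Vt *ᵥ y) = (G *ᵥ x) ⬝ᵥ y := by
    intro x y
    rw [dotProduct_mulVec, ← Matrix.mulVec_transpose, Matrix.mulVec_mulVec, ← hGdef]
  have hGT : Gᵀ = G := by rw [hGdef, Matrix.transpose_mul, Matrix.transpose_transpose]
  have hGdet : G.det ≠ 0 := by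
    intro h0
    obtain ⟨v, hv0, hv⟩ := (Matrix.exists_mulVec_eq_zero_iff).mpr h0
    apply hv0
    have h1 : (Vt *ᵥ v) ⬝ᵥ (Vt *ᵥ v) = 0 := by
      rw [hVdot, hv, zero_dotProduct]
    exact hVinj v (dotProduct_self_eq_zero.mp h1)
  have hGunit : IsUnit G.det := isUnit_iff_ne_zero.mpr hGdet
  have hGA : G * A = 1 := Matrix.mul_nonsing_inv _ hGunit
  have hAG : A * G = 1 := Matrix.nonsing_inv_mul _ hGunit
  have hAT : Aᵀ = A := by rw [hAdef, Matrix.transpose_nonsing_inv, hGT]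
  have hvmA : ∀ x : {x // x ∈ Shat} → ℝ, x ᵥ* A = A *ᵥ x := by
    intro x; conv_lhs => rw [← hAT]
    rw [Matrix.vecMul_transpose]
  have hvmG : ∀ x : {x // x ∈ Shat} → ℝ, x ᵥ* G = G *ᵥ x := by
    intro x; conv_lhs => rw [← hGT]
    rw [Matrix.vecMul_transpose]
  have hdotA : ∀ x y : {x // x ∈ Shat} → ℝ, (A *ᵥ x) ⬝ᵥ y = x ⬝ᵥ (A *ᵥ y) := by
    intro x y
    rw [dotProduct_comm, dotProduct_mulVec, hvmA, dotProduct_comm]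
  have hdotG : ∀ x y : {x // x ∈ Shat} → ℝ, (G *ᵥ x) ⬝ᵥ y = x ⬝ᵥ (G *ᵥ y) := by
    intro x y
    rw [dotProduct_comm, dotProduct_mulVec, hvmG, dotProduct_comm]
  -- cancellation helpers
  have hGAX : ∀ M : Matrix {x // x ∈ Shat} {x // x ∈ Shat} ℝ, G * (A * M) = M := by
    intro M; rw [← Matrix.mul_assoc, hGA, Matrix.one_mul]
  have hAGX : ∀ M : Matrix {x // x ∈ Shat} {x // x ∈ Shat} ℝ, A * (G * M) = M := by
    intro M; rw [← Matrix.mul_assoc, hAG, Matrix.one_mul]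
  have hmerge : ∀ M1 M2 : Matrix {x // x ∈ Shat} {x // x ∈ Shat} ℝ,
      (Vt * M1 * Vtᵀ) * (Vt * M2 * Vtᵀ) = Vt * (M1 * (G * M2)) * Vtᵀ := by
    intro M1 M2
    rw [hGdef]
    simp only [Matrix.mul_assoc]
  -- X in Vt form and the pseudoinverse formula
  have hXVt : X = Vt * (1 : Matrix {x // x ∈ Shat} {x // x ∈ Shat} ℝ) * Vtᵀ := by
    rw [Matrix.mul_one, hX]
    ext a b
    simp only [Matrix.sum_apply, vecMulVec_apply, Matrix.mul_apply, hVt, Matrix.of_apply,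
      Matrix.transpose_apply, Finset.univ_eq_attach]
    rw [← Finset.sum_attach Shat (fun l => V a l * V b l)]
  have hPform : P = Vt * (A * A) * Vtᵀ := by
    apply pinv_unique hP
    have hsymm : (Vt * A * Vtᵀ)ᵀ = Vt * A * Vtᵀ := by
      rw [Matrix.transpose_mul, Matrix.transpose_mul, Matrix.transpose_transpose, hAT,
        Matrix.mul_assoc]
    have hXP : X * (Vt * (A * A) * Vtᵀ) = Vt * A * Vtᵀ := by
      rw [hXVt, hmerge]
      rw [Matrix.one_mul, hGAX]
    have hPX : (Vt * (A * A) * Vtᵀ) * X = Vt * A * Vtᵀ := by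
      rw [hXVt, hmerge, Matrix.mul_one, Matrix.mul_assoc A A G, hAG, Matrix.mul_one]
    refine ⟨?_, ?_, ?_, ?_⟩
    · rw [hXP, hXVt, hmerge, Matrix.mul_one, hAG]
    · rw [hPX, hmerge, hGAX]
    · rw [hXP]; exact hsymm
    · rw [hPX]; exact hsymm
  have hPXform : P * X = Vt * A * Vtᵀ := by
    rw [hPform, hXVt, hmerge, Matrix.mul_one, Matrix.mul_assoc A A G, hAG, Matrix.mul_one]
  -- per (i,j) data
  set i0 : {x // x ∈ Shat} := ⟨i, hi⟩ with hi0
  set ev : {x // x ∈ Shat} → ℝ := Pi.single i0 1 with hev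
  set gv : {x // x ∈ Shat} → ℝ := Vtᵀ *ᵥ wv with hgv
  set qv : {x // x ∈ Shat} → ℝ := A *ᵥ gv with hqv
  set av : {x // x ∈ Shat} → ℝ := A *ᵥ ev with hav
  set qt : {x // x ∈ Shat} → ℝ := qv - ev with hqt
  set mv : {x // x ∈ Shat} → ℝ := gv - G *ᵥ ev with hmv
  set fS : ℝ := ev ⬝ᵥ qv with hfS
  set bS : ℝ := ev ⬝ᵥ av with hbS
  set cS : ℝ := qv ⬝ᵥ qv with hcS
  set gmS : ℝ := wv ⬝ᵥ wv with hgmS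
  set hS : ℝ := gmS - gv ⬝ᵥ qv with hhS
  set pS : ℝ := av ⬝ᵥ av with hpS
  set eS : ℝ := av ⬝ᵥ qv with heS
  set dS : ℝ := fS^2 + hS * bS with hdS
  set aS : ℝ := (wv - uv) ⬝ᵥ (wv - uv) with haS
  have huev : Vt *ᵥ ev = uv := by
    funext a
    simp [hev, huv, hVt, hi0]
  -- mulVec facts
  have hGq : G *ᵥ qv = gv := by rw [hqv, Matrix.mulVec_mulVec, hGA, Matrix.one_mulVec]
  have hGa : G *ᵥ av = ev := by rw [hav, Matrix.mulVec_mulVec, hGA, Matrix.one_mulVec]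
  have hGqt : G *ᵥ qt = mv := by rw [hqt, Matrix.mulVec_sub, hGq, hmv]
  have hAm : A *ᵥ mv = qt := by
    have hAGe : A *ᵥ (G *ᵥ ev) = ev := by rw [Matrix.mulVec_mulVec, hAG, Matrix.one_mulVec]
    rw [hmv, Matrix.mulVec_sub, hAGe, ← hqv, ← hqt]
  have hVtu : Vtᵀ *ᵥ uv = G *ᵥ ev := by
    rw [← huev, Matrix.mulVec_mulVec, ← hGdef]
  -- dot product facts
  have hee : ev ⬝ᵥ ev = 1 := by
    rw [hev, single_dotProduct, one_mul, Pi.single_eq_same]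
  have hqe : qv ⬝ᵥ ev = fS := by rw [dotProduct_comm, hfS]
  have hwVt : wv ᵥ* Vt = gv := by rw [← Matrix.mulVec_transpose, ← hgv]
  have hgav : gv ⬝ᵥ av = fS := by
    rw [hav, ← hdotA, ← hqv, dotProduct_comm, ← hfS]
  have hGeav : (G *ᵥ ev) ⬝ᵥ av = 1 := by rw [hdotG, hGa, hee]
  have hmav : mv ⬝ᵥ av = fS - 1 := by rw [hmv, sub_dotProduct, hgav, hGeav]
  have heqt : ev ⬝ᵥ qt = fS - 1 := by rw [hqt, dotProduct_sub, ← hfS, hee]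
  have hd1 : (G *ᵥ ev) ⬝ᵥ qv = gv ⬝ᵥ ev := by rw [hdotG, hGq, dotProduct_comm]
  have hd3 : wv ⬝ᵥ uv = gv ⬝ᵥ ev := by rw [← huev, dotProduct_mulVec, hwVt]
  have hd4 : uv ⬝ᵥ wv = gv ⬝ᵥ ev := by rw [dotProduct_comm]; exact hd3
  have hd5 : uv ⬝ᵥ uv = (G *ᵥ ev) ⬝ᵥ ev := by rw [← huev, hVdot]
  have haS2 : aS = gmS - 2 * (gv ⬝ᵥ ev) + (G *ᵥ ev) ⬝ᵥ ev := by
    rw [haS, sub_dotProduct, dotProduct_sub, dotProduct_sub, hd3, hd4, hd5, ← hgmS]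
    ring
  have hmqt : mv ⬝ᵥ qt = aS - hS := by
    rw [hmv, hqt, sub_dotProduct, dotProduct_sub, dotProduct_sub, hd1, haS2, hhS]
    ring
  -- nonnegativity facts
  have hdnn : ∀ x : Fin d → ℝ, 0 ≤ x ⬝ᵥ x :=
    fun x => Finset.sum_nonneg (fun c _ => mul_self_nonneg _)
  have hdnnS : ∀ x : {x // x ∈ Shat} → ℝ, 0 ≤ x ⬝ᵥ x :=
    fun x => Finset.sum_nonneg (fun c _ => mul_self_nonneg _)
  have hSalt : (wv - Vt *ᵥ qv) ⬝ᵥ (wv - Vt *ᵥ qv) = hS := by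
    have k1 : wv ⬝ᵥ (Vt *ᵥ qv) = gv ⬝ᵥ qv := by rw [dotProduct_mulVec, hwVt]
    have k2 : (Vt *ᵥ qv) ⬝ᵥ wv = gv ⬝ᵥ qv := by rw [dotProduct_comm]; exact k1
    have k3 : (Vt *ᵥ qv) ⬝ᵥ (Vt *ᵥ qv) = gv ⬝ᵥ qv := by rw [hVdot, hGq]
    rw [sub_dotProduct, dotProduct_sub, dotProduct_sub, k1, k2, k3, hhS, ← hgmS]
    ring
  have hSnn : 0 ≤ hS := hSalt ▸ hdnn _
  have hbalt : (Vt *ᵥ av) ⬝ᵥ (Vt *ᵥ av) = bS := by rw [hVdot, hGa, ← hbS]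
  have hbnn : 0 ≤ bS := hbalt ▸ hdnn _
  have hbpos : 0 < bS := by
    refine lt_of_le_of_ne hbnn (Ne.symm ?_)
    intro h0
    have hv0 : Vt *ᵥ av = 0 := dotProduct_self_eq_zero.mp (by rw [hbalt, h0])
    have hav0 : av = 0 := hVinj _ hv0
    have hev0 : ev = 0 := by rw [← hGa, hav0, Matrix.mulVec_zero]
    have := congrFun hev0 i0
    simp [hev, Pi.single_eq_same] at this
  have hcnn : 0 ≤ cS := hcS ▸ hdnnS _
  -- translation of the goal quantities
  have hP2form : P * P = Vt * ((A * A) * A) * Vtᵀ := by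
    rw [hPform, hmerge, hGAX]
  have hP3form : P * P * P = Vt * (((A * A) * A) * A) * Vtᵀ := by
    rw [hP2form, hPform, hmerge, hGAX]
  have hdot1 : ∀ (M : Matrix {x // x ∈ Shat} {x // x ∈ Shat} ℝ) (x y : {x // x ∈ Shat} → ℝ),
      (Vt *ᵥ x) ⬝ᵥ ((Vt * M * Vtᵀ) *ᵥ (Vt *ᵥ y)) = x ⬝ᵥ ((G * (M * G)) *ᵥ y) := by
    intro M x y
    rw [Matrix.mulVec_mulVec]
    have hm : (Vt * M * Vtᵀ) * Vt = Vt * (M * G) := by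
      rw [hGdef]; simp only [Matrix.mul_assoc]
    rw [hm, ← Matrix.mulVec_mulVec, hVdot, hdotG, Matrix.mulVec_mulVec]
  have hMw : ∀ M : Matrix {x // x ∈ Shat} {x // x ∈ Shat} ℝ,
      (Vt * M * Vtᵀ) *ᵥ wv = Vt *ᵥ (M *ᵥ gv) := by
    intro M
    rw [← Matrix.mulVec_mulVec, ← Matrix.mulVec_mulVec, ← hgv]
  have hdot2 : ∀ (M : Matrix {x // x ∈ Shat} {x // x ∈ Shat} ℝ) (x : {x // x ∈ Shat} → ℝ),
      (Vt *ᵥ x) ⬝ᵥ ((Vt * M * Vtᵀ) *ᵥ wv) = x ⬝ᵥ ((G * M) *ᵥ gv) := by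
    intro M x
    rw [hMw, hVdot, hdotG, Matrix.mulVec_mulVec]
  have hdot3 : ∀ M : Matrix {x // x ∈ Shat} {x // x ∈ Shat} ℝ,
      wv ⬝ᵥ ((Vt * M * Vtᵀ) *ᵥ wv) = gv ⬝ᵥ (M *ᵥ gv) := by
    intro M
    rw [hMw, dotProduct_mulVec, hwVt]
  have g1 : uv ⬝ᵥ ((P * P * P) *ᵥ uv) = pS := by
    rw [hP3form, ← huev, hdot1]
    have hred : G * ((((A * A) * A) * A) * G) = A * A := by
      simp only [Matrix.mul_assoc]
      rw [hAG, Matrix.mul_one, hGAX]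
    rw [hred, ← Matrix.mulVec_mulVec, ← hav, ← hdotA, ← hav, ← hpS]
  have g2 : uv ⬝ᵥ ((P * P) *ᵥ uv) = bS := by
    rw [hP2form, ← huev, hdot1]
    have hred : G * (((A * A) * A) * G) = A := by
      simp only [Matrix.mul_assoc]
      rw [hAG, Matrix.mul_one, hGAX]
    rw [hred, ← hav, ← hbS]
  have g3 : wv ⬝ᵥ ((1 - P * X) *ᵥ wv) = hS := by
    rw [Matrix.sub_mulVec, Matrix.one_mulVec, dotProduct_sub, hPXform, hdot3, ← hqv, ← hgmS, ← hhS]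
  have g4 : uv ⬝ᵥ ((P * P) *ᵥ wv) = eS := by
    rw [hP2form, ← huev, hdot2]
    have hred : G * ((A * A) * A) = A * A := by
      simp only [Matrix.mul_assoc]; rw [hGAX]
    rw [hred, ← Matrix.mulVec_mulVec, ← hqv, ← hdotA, ← hav, ← heS]
  have g5 : uv ⬝ᵥ (P *ᵥ wv) = fS := by
    rw [hPform, ← huev, hdot2, hGAX, ← hqv, ← hfS]
  have g6 : wv ⬝ᵥ (P *ᵥ wv) = cS := by
    rw [hPform, hdot3, ← Matrix.mulVec_mulVec, ← hqv, ← hdotA, ← hqv, ← hcS]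
  rw [g1, g2, g3, g4, g5, g6]
  -- goal : pS * hS ≤ bS + bS * cS - 2 * eS * fS
  by_cases hdl : dS = 0
  · -- degenerate case
    have hdl' : fS ^ 2 + hS * bS = 0 := by rw [← hdS]; exact hdl
    have h2 : (0:ℝ) ≤ hS * bS := mul_nonneg hSnn hbnn
    have h4 : fS ^ 2 = 0 := le_antisymm (by linarith [sq_nonneg fS]) (sq_nonneg fS)
    have hf0 : fS = 0 := by
      exact pow_eq_zero_iff (two_ne_zero) |>.mp h4
    have h5 : hS * bS = 0 := by linarith
    have hh0 : hS = 0 := by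
      rcases mul_eq_zero.mp h5 with h | h
      · exact h
      · exact absurd h (ne_of_gt hbpos)
    rw [hf0, hh0, mul_zero, mul_zero, sub_zero]
    linarith [mul_nonneg hbnn hcnn]
  · -- main case: exchange matrix
    set Nt : Matrix (Fin d) {x // x ∈ Shat} ℝ :=
      Matrix.of (fun a k => if k = i0 then V a j else V a k.1) with hNt
    set Gt : Matrix {x // x ∈ Shat} {x // x ∈ Shat} ℝ := Ntᵀ * Nt with hGt
    have hNdec : Nt = Vt + vecMulVec (wv - uv) ev := by
      ext a k
      by_cases hk : k = i0
      · subst hk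
        simp [hNt, hVt, vecMulVec_apply, hev, Pi.single_eq_same, hwv, huv, hi0]
      · simp [hNt, hVt, vecMulVec_apply, hev, Pi.single_eq_of_ne hk, hk]
    have hGtdec : Gt = G + vecMulVec mv ev + vecMulVec ev mv + aS • vecMulVec ev ev := by
      have d1 : Vtᵀ *ᵥ (wv - uv) = mv := by rw [Matrix.mulVec_sub, hVtu, ← hgv, ← hmv]
      have d2 : (wv - uv) ᵥ* Vt = mv := by rw [← Matrix.mulVec_transpose, d1]
      rw [hGt, hNdec, Matrix.transpose_add, vmv_transpose, Matrix.add_mul, Matrix.mul_add,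
        Matrix.mul_add, mul_vmv, vmv_mul, vmv_mul_vmv, d1, d2, ← hGdef, ← haS]
      abel
    set W : Matrix {x // x ∈ Shat} {x // x ∈ Shat} ℝ :=
      bS • vecMulVec qt qt - hS • vecMulVec av av
        - fS • (vecMulVec av qt + vecMulVec qt av) with hW
    set SS : Matrix {x // x ∈ Shat} {x // x ∈ Shat} ℝ :=
      vecMulVec ev qt + vecMulVec mv av + aS • vecMulVec ev av with hSS
    set Z : Matrix {x // x ∈ Shat} {x // x ∈ Shat} ℝ := A + dS⁻¹ • W with hZ
    have hevA : ev ᵥ* A = av := by rw [hvmA, ← hav]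
    have hmvA : mv ᵥ* A = qt := by rw [hvmA, hAm]
    have h1 : Gt * A = 1 + SS := by
      rw [hGtdec, Matrix.add_mul, Matrix.add_mul, Matrix.add_mul, hGA, Matrix.smul_mul,
        vmv_mul, vmv_mul, vmv_mul, hevA, hmvA, hSS]
      abel
    have h2 : Gt * W = (-dS) • SS := by
      rw [hGtdec, hW, hSS, hdS]
      simp only [Matrix.add_mul, Matrix.mul_sub, Matrix.mul_add, Matrix.mul_smul,
        Matrix.smul_mul, mul_vmv, vmv_mulVec, smul_vmv, vmv_mul_vmv]
      try simp only [← hqt, ← hmv]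
      simp only [hGqt, hGa, hmav, hmqt, heqt, ← hbS]
      ext k l
      simp only [Matrix.add_apply, Matrix.sub_apply, Matrix.smul_apply, vecMulVec_apply,
        smul_eq_mul, Matrix.neg_apply]
      ring
    have hGtZ : Gt * Z = 1 := by
      rw [hZ, Matrix.mul_add, Matrix.mul_smul, h1, h2, smul_smul]
      have hc : dS⁻¹ * -dS = -1 := by field_simp
      rw [hc, neg_one_smul, add_assoc, add_neg_cancel, add_zero]
    have hGtdet : Gt.det ≠ 0 := Matrix.det_ne_zero_of_right_inverse hGtZ
    have hGtinv : Gt⁻¹ = Z := Matrix.inv_eq_right_inv hGtZ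
    -- trace of Z
    have hqtqt : qt ⬝ᵥ qt = cS - 2 * fS + 1 := by
      rw [hqt, sub_dotProduct, dotProduct_sub, dotProduct_sub, hqe, ← hfS, ← hcS, hee]
      ring
    have havqt : av ⬝ᵥ qt = eS - bS := by
      rw [hqt, dotProduct_sub, ← heS, dotProduct_comm av ev, ← hbS]
    have hqtav : qt ⬝ᵥ av = eS - bS := by rw [dotProduct_comm]; exact havqt
    have htrZ : Z.trace = A.trace
        + dS⁻¹ * (bS * (cS - 2 * fS + 1) - hS * pS - fS * ((eS - bS) + (eS - bS))) := by
      rw [hZ, hW, Matrix.trace_add, Matrix.trace_smul, Matrix.trace_sub, Matrix.trace_sub,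
        Matrix.trace_smul, Matrix.trace_smul, Matrix.trace_smul, Matrix.trace_add,
        trace_vmv, trace_vmv, trace_vmv, trace_vmv, hqtqt, havqt, hqtav, ← hpS]
      simp only [smul_eq_mul]
      try ring
    -- the equivalence between the exchanged index set and Shat
    have hjT : j ∈ insert j (Shat.erase i) := Finset.mem_insert_self _ _
    have hmemT : ∀ y : {x // x ∈ Shat}, y.1 ≠ i → y.1 ∈ insert j (Shat.erase i) :=
      fun y hy => Finset.mem_insert_of_mem (Finset.mem_erase.mpr ⟨hy, y.2⟩)
    have hxiT : ∀ x : {x // x ∈ insert j (Shat.erase i)}, x.1 ∈ Shat → x.1 ≠ i := by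
      intro x hx
      rcases Finset.mem_insert.mp x.2 with h | h
      · exact absurd (h ▸ hx) hj
      · exact (Finset.mem_erase.mp h).1
    have hxjT : ∀ x : {x // x ∈ insert j (Shat.erase i)}, x.1 ∉ Shat → x.1 = j := by
      intro x hx
      rcases Finset.mem_insert.mp x.2 with h | h
      · exact h
      · exact absurd (Finset.mem_erase.mp h).2 hx
    set σ : {x // x ∈ insert j (Shat.erase i)} ≃ {x // x ∈ Shat} :=
      ⟨fun x => if hx : x.1 ∈ Shat then ⟨x.1, hx⟩ else i0,
       fun y => if hy : y.1 = i then ⟨j, hjT⟩ else ⟨y.1, hmemT y hy⟩,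
       fun x => by
         by_cases hx : x.1 ∈ Shat
         · simp only [dif_pos hx, dif_neg (hxiT x hx)]
         · simp only [dif_neg hx, hi0, dif_pos]
           exact Subtype.ext (hxjT x hx).symm,
       fun y => by
         by_cases hy : y.1 = i
         · simp only [dif_pos hy, dif_neg hj]
           exact Subtype.ext hy.symm
         · simp only [dif_neg hy, dif_pos y.2]⟩ with hsig
    have hsubS : subSub (Vᵀ * V) Shat = G := by
      ext a b
      simp [subSub, hGdef, Matrix.mul_apply, hVt, Matrix.transpose_apply]
    have hNapp : ∀ (x : {x // x ∈ insert j (Shat.erase i)}) (cc : Fin d),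
        Nt cc (σ x) = V cc x.1 := by
      intro x cc
      by_cases hx : x.1 ∈ Shat
      · have hσx : σ x = ⟨x.1, hx⟩ := by simp only [hsig, Equiv.coe_fn_mk, dif_pos hx]
        rw [hσx, hNt]
        simp only [Matrix.of_apply]
        rw [if_neg]
        intro hcon
        exact hxiT x hx (congrArg Subtype.val hcon)
      · have hσx : σ x = i0 := by simp only [hsig, Equiv.coe_fn_mk, dif_neg hx]
        rw [hσx, hNt]
        simp only [Matrix.of_apply, eq_self_iff_true, if_true]
        rw [hxjT x hx]
    have hsubT : subSub (Vᵀ * V) (insert j (Shat.erase i)) = Gt.submatrix σ σ := by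
      ext a b
      simp only [subSub, Matrix.of_apply, Matrix.submatrix_apply, hGt, Matrix.mul_apply,
        Matrix.transpose_apply]
      refine Finset.sum_congr rfl (fun c _ => ?_)
      rw [hNapp a c, hNapp b c]
    have hdetT : (subSub (Vᵀ * V) (insert j (Shat.erase i))).det ≠ 0 := by
      rw [hsubT, Matrix.det_submatrix_equiv_self]; exact hGtdet
    have hkey := hloc i hi j hj hdetT
    rw [hsubS, hsubT, Matrix.inv_submatrix_equiv, trace_submatrix_equiv, hGtinv, ← hAdef] at hkey
    -- conclude
    have hdSnn : 0 ≤ dS := by rw [hdS]; nlinarith [sq_nonneg fS, mul_nonneg hSnn hbnn]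
    have hdSpos : 0 < dS := lt_of_le_of_ne hdSnn (Ne.symm hdl)
    have h0 : 0 ≤ dS⁻¹ * (bS * (cS - 2 * fS + 1) - hS * pS - fS * ((eS - bS) + (eS - bS))) := by
      rw [htrZ] at hkey
      linarith
    have hE : 0 ≤ bS * (cS - 2 * fS + 1) - hS * pS - fS * ((eS - bS) + (eS - bS)) := by
      have := mul_nonneg hdSpos.le h0
      rw [← mul_assoc, mul_inv_cancel₀ (ne_of_gt hdSpos), one_mul] at this
      exact this
    ring_nf at hE ⊢
    linarith [hE]
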